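/- (Znám's theorem) Let a_1 (mod m_1), …, a_N (mod m_N) be residue classes that are pairwise disjoint and whose union is all of ℤ (an exact covering system), with M = lcm(m_1, …, m_N) ≥ 2, and let p be the smallest prime dividing M. Then the largest modulus max_i m_i is attained by at least p of the residue classes. -/

import Mathlib

open Finset

lemma geom_zero {x : ℂ} (h1 : x ≠ 1) {n : ℕ} (hx : x ^ n = 1) :
    ∑ t ∈ range n, x ^ t = 0 := by
  have h := geom_sum_mul x n
  rw [hx, sub_self] at h
  rcases mul_eq_zero.mp h with h' | h'
  · exact h'
  · exact absurd (sub_eq_zero.mp h') h1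

-- fiber of gcd sum
lemma gcd_fiber_sum (n d : ℕ) (hd : d ∣ n) (hn : 0 < n) (G : ℕ → ℂ) :
    ∑ t ∈ (range n).filter (fun t => n.gcd t = d), G t
      = ∑ k ∈ (range (n / d)).filter (n / d).Coprime, G (d * k) := by
  rcases Nat.eq_zero_or_pos d with (rfl | hd0)
  · exact absurd (Nat.eq_zero_of_zero_dvd hd) hn.ne'
  apply Finset.sum_nbij' (fun t => t / d) (fun k => d * k)
  · intro t ht
    simp only [mem_filter, mem_range] at ht ⊢
    obtain ⟨ht1, ht2⟩ := ht
    have hdt : d ∣ t := ht2 ▸ Nat.gcd_dvd_right n t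
    constructor
    · exact Nat.div_lt_div_of_lt_of_dvd hd (by omega)
    · have : n.gcd t / d = 1 := by rw [ht2]; exact Nat.div_self hd0
      rw [Nat.Coprime, Nat.gcd_div hd hdt]
      exact this
  · intro k hk
    simp only [mem_filter, mem_range] at hk ⊢
    obtain ⟨hk1, hk2⟩ := hk
    constructor
    · calc d * k < d * (n / d) := by exact (Nat.mul_lt_mul_left hd0).mpr hk1
        _ = n := Nat.mul_div_cancel' hd
    · conv_lhs => rw [← Nat.mul_div_cancel' hd]
      rw [Nat.gcd_mul_left, hk2, mul_one]
  · intro t ht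
    simp only [mem_filter, mem_range] at ht
    exact (Nat.mul_div_cancel' (ht.2 ▸ Nat.gcd_dvd_right n t))
  · intro k hk
    exact Nat.mul_div_cancel_left k hd0
  · intro t ht
    simp only [mem_filter, mem_range] at ht
    rw [Nat.mul_div_cancel' (ht.2 ▸ Nat.gcd_dvd_right n t)]

lemma sum_moebius_divisors {n : ℕ} (hn : 2 ≤ n) :
    ∑ d ∈ n.divisors, ArithmeticFunction.moebius d = 0 := by
  have h2 : ((ArithmeticFunction.moebius * ArithmeticFunction.zeta :
      ArithmeticFunction ℤ)) n = (1 : ArithmeticFunction ℤ) n := by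
    rw [ArithmeticFunction.moebius_mul_coe_zeta]
  rwa [ArithmeticFunction.coe_mul_zeta_apply, ArithmeticFunction.one_apply,
    if_neg (by omega)] at h2

lemma unitSum_eq_moebius : ∀ (n : ℕ), 0 < n → ∀ (η : ℂ), IsPrimitiveRoot η n →
    ∑ t ∈ (range n).filter n.Coprime, η ^ t = (ArithmeticFunction.moebius n : ℂ) := by
  intro n
  induction n using Nat.strong_induction_on with
  | _ n IH =>
    intro hn η hη
    rcases eq_or_lt_of_le (Nat.one_le_iff_ne_zero.mpr hn.ne') with h1 | h1
    · -- n = 1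
      rw [← h1]
      simp [ArithmeticFunction.moebius_apply_one, Finset.filter_singleton, Nat.coprime_one_left]
    -- n ≥ 2
    have hzero : ∑ t ∈ range n, η ^ t = 0 :=
      geom_zero (hη.ne_one h1) hη.pow_eq_one
    have hfib : ∑ t ∈ range n, η ^ t
        = ∑ d ∈ n.divisors, ∑ t ∈ (range n).filter (fun t => n.gcd t = d), η ^ t := by
      exact (Finset.sum_fiberwise_of_maps_to (fun t _ => Nat.mem_divisors.mpr
        ⟨Nat.gcd_dvd_left n t, hn.ne'⟩) _).symm
    have hval : ∀ d ∈ n.divisors, d ≠ 1 →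
        ∑ t ∈ (range n).filter (fun t => n.gcd t = d), η ^ t
          = (ArithmeticFunction.moebius (n / d) : ℂ) := by
      intro d hd hd1
      obtain ⟨hdvd, -⟩ := Nat.mem_divisors.mp hd
      have hd0 : 0 < d := Nat.pos_of_mem_divisors hd
      have hnd : 0 < n / d := Nat.div_pos (Nat.le_of_dvd hn hdvd) hd0
      have hlt : n / d < n := Nat.div_lt_self hn (by omega)
      have hprim : IsPrimitiveRoot (η ^ d) (n / d) := by
        have := hη.pow hn (Nat.mul_div_cancel' hdvd).symm
        exact this
      rw [gcd_fiber_sum n d hdvd hn]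
      have := IH (n / d) hlt hnd (η ^ d) hprim
      rw [← this]
      apply Finset.sum_congr rfl
      intro k _
      rw [← pow_mul]
    have h1dvd : (1:ℕ) ∈ n.divisors := Nat.one_mem_divisors.mpr hn.ne'
    rw [hfib, ← Finset.add_sum_erase _ _ h1dvd] at hzero
    have herase : ∑ d ∈ n.divisors.erase 1,
        ∑ t ∈ (range n).filter (fun t => n.gcd t = d), η ^ t
        = ∑ d ∈ n.divisors.erase 1, (ArithmeticFunction.moebius (n / d) : ℂ) :=
      Finset.sum_congr rfl (fun d hd =>
        hval d (Finset.mem_of_mem_erase hd) (Finset.ne_of_mem_erase hd))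
    have hdiv0 : ∑ d ∈ n.divisors, (ArithmeticFunction.moebius (n / d) : ℂ) = 0 := by
      rw [← Int.cast_zero, ← sum_moebius_divisors h1, ← Nat.sum_div_divisors n
        ArithmeticFunction.moebius, Int.cast_sum]
    rw [← Finset.add_sum_erase _ _ h1dvd, Nat.div_one] at hdiv0
    have herase2 : ∑ d ∈ n.divisors.erase 1, (ArithmeticFunction.moebius (n / d) : ℂ)
        = -(ArithmeticFunction.moebius n : ℂ) := by linear_combination hdiv0
    rw [herase, herase2] at hzero
    have hfilter : (range n).filter (fun t => n.gcd t = 1)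
        = (range n).filter n.Coprime := by
      apply Finset.filter_congr
      intro x _
      exact Iff.rfl
    rw [hfilter] at hzero
    linear_combination hzero

lemma unitsSum_eq (k : ℕ) [NeZero k] (g : ℕ → ℂ) :
    ∑ x : (ZMod k)ˣ, g (x : ZMod k).val = ∑ t ∈ (range k).filter k.Coprime, g t := by
  refine Finset.sum_nbij' (fun x => (x : ZMod k).val)
    (fun t => if h : Nat.Coprime t k then ZMod.unitOfCoprime t h else 1) ?_ ?_ ?_ ?_ ?_
  · intro x _
    simp only [mem_filter, mem_range]
    exact ⟨ZMod.val_lt _, (ZMod.val_coe_unit_coprime x).symm⟩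
  · intro t _; exact Finset.mem_univ _
  · intro x _
    have h := ZMod.val_coe_unit_coprime x
    rw [dif_pos h]
    apply Units.ext
    rw [ZMod.coe_unitOfCoprime]
    exact ZMod.natCast_rightInverse _
  · intro t ht
    simp only [mem_filter, mem_range] at ht
    rw [dif_pos (Nat.Coprime.symm ht.2)]
    rw [ZMod.coe_unitOfCoprime, ZMod.val_natCast, Nat.mod_eq_of_lt ht.1]
  · intro x _; rfl

lemma units_pushforward {m m' : ℕ} [NeZero m] [NeZero m'] (hdvd : m' ∣ m) (g : ℕ → ℂ) :
    (Nat.totient m' : ℂ) * ∑ t ∈ (range m).filter m.Coprime, g (t % m')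
      = (Nat.totient m : ℂ) * ∑ u ∈ (range m').filter m'.Coprime, g u := by
  set ψ := ZMod.unitsMap hdvd with hψ
  have hval : ∀ x : (ZMod m)ˣ, ((ψ x : ZMod m').val) = (x : ZMod m).val % m' := by
    intro x
    have : ((ψ x : ZMod m')) = (((x : ZMod m).val : ℕ) : ZMod m') := by
      rw [hψ, ZMod.unitsMap_def]
      simp only [Units.coe_map, ZMod.castHom_apply, MonoidHom.coe_coe]
      rw [← ZMod.natCast_val]
    rw [this, ZMod.val_natCast]
  -- rewrite both sums as sums over units
  rw [← unitsSum_eq m (fun t => g (t % m')), ← unitsSum_eq m' g]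
  have hre : ∑ x : (ZMod m)ˣ, g ((x : ZMod m).val % m')
      = ∑ x : (ZMod m)ˣ, g ((ψ x : ZMod m').val) := by
    exact Finset.sum_congr rfl (fun x _ => by rw [hval])
  rw [hre]
  -- fiberwise
  have hfib : ∑ x : (ZMod m)ˣ, g ((ψ x : ZMod m').val)
      = ∑ y : (ZMod m')ˣ, ∑ x ∈ Finset.univ.filter (fun x => ψ x = y),
          g ((ψ x : ZMod m').val) :=
    (Finset.sum_fiberwise_of_maps_to (fun x _ => Finset.mem_univ (ψ x)) _).symm
  have hfib2 : ∀ y : (ZMod m')ˣ, ∑ x ∈ Finset.univ.filter (fun x => ψ x = y),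
      g ((ψ x : ZMod m').val)
      = (Finset.univ.filter (fun x => ψ x = y)).card • g ((y : ZMod m').val) := by
    intro y
    rw [Finset.sum_congr rfl (fun x hx => by
      rw [(Finset.mem_filter.mp hx).2]), Finset.sum_const]
  -- all fibers have the same cardinality
  have hcard : ∀ y : (ZMod m')ˣ, (Finset.univ.filter (fun x => ψ x = y)).card
      = (Finset.univ.filter (fun x => ψ x = 1)).card := by
    intro y
    obtain ⟨x₀, hx₀⟩ := ZMod.unitsMap_surjective hdvd y
    apply Finset.card_nbij' (fun x => x * x₀⁻¹) (fun x => x * x₀)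
    · intro x hx
      simp only [Finset.mem_coe, Finset.mem_filter, Finset.mem_univ, true_and] at hx ⊢
      rw [map_mul, hx, map_inv, hx₀, mul_inv_cancel]
    · intro x hx
      simp only [Finset.mem_coe, Finset.mem_filter, Finset.mem_univ, true_and] at hx ⊢
      rw [map_mul, hx, hx₀, one_mul]
    · intro x _; simp [mul_assoc]
    · intro x _; simp [mul_assoc]
  set K := (Finset.univ.filter (fun x => ψ x = (1 : (ZMod m')ˣ))).card with hK
  have hcount : Fintype.card (ZMod m)ˣ = Fintype.card (ZMod m')ˣ * K := by
    rw [← Finset.card_univ, Finset.card_eq_sum_card_fiberwise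
      (f := ψ) (t := Finset.univ) (fun x _ => Finset.mem_univ _)]
    rw [Finset.sum_congr rfl (fun y _ => hcard y), Finset.sum_const, ← Finset.card_univ]
    simp [mul_comm, hK]
  rw [hfib, Finset.sum_congr rfl (fun y _ => hfib2 y)]
  have : ∀ y : (ZMod m')ˣ, (Finset.univ.filter (fun x => ψ x = y)).card
      • g ((y : ZMod m').val) = (K : ℂ) * g ((y : ZMod m').val) := by
    intro y
    rw [hcard y]
    exact nsmul_eq_mul K _
  rw [Finset.sum_congr rfl (fun y _ => this y), ← Finset.mul_sum]
  rw [← mul_assoc]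
  congr 1
  rw [← ZMod.card_units_eq_totient m, ← ZMod.card_units_eq_totient m', hcount]
  push_cast
  ring

lemma moebius_norm_le_one (n : ℕ) : ‖((ArithmeticFunction.moebius n : ℤ) : ℂ)‖ ≤ 1 := by
  by_cases hsq : Squarefree n
  · rw [ArithmeticFunction.moebius_apply_of_squarefree hsq]
    push_cast
    rw [norm_pow, norm_neg, norm_one, one_pow]
  · rw [ArithmeticFunction.moebius_eq_zero_of_not_squarefree hsq]
    simp

lemma ramanujan_bound {m : ℕ} (hm : 2 ≤ m) {ζ : ℂ} (hζ : IsPrimitiveRoot ζ m)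
    {e : ℕ} (he : ¬ m ∣ e) :
    (m.minFac - 1 : ℝ) * ‖∑ t ∈ (range m).filter m.Coprime, ζ ^ (t * e)‖
      ≤ (m.totient : ℝ) := by
  have hm0 : 0 < m := by omega
  haveI : NeZero m := ⟨hm0.ne'⟩
  set η := ζ ^ e with hη
  have hζfin : IsOfFinOrder ζ := isOfFinOrder_iff_pow_eq_one.mpr ⟨m, hm0, hζ.pow_eq_one⟩
  have hordζ : orderOf ζ = m := hζ.eq_orderOf.symm
  have hgcdpos : 0 < Nat.gcd m e := Nat.gcd_pos_of_pos_left e hm0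
  set m1 := m / Nat.gcd m e with hm1def
  have hordη : orderOf η = m1 := by
    rw [hη, hζfin.orderOf_pow, hordζ]
  have hm1dvd : m1 ∣ m := Nat.div_dvd_of_dvd (Nat.gcd_dvd_left m e)
  have hm1pos : 0 < m1 :=
    Nat.div_pos (Nat.le_of_dvd hm0 (Nat.gcd_dvd_left m e)) hgcdpos
  haveI : NeZero m1 := ⟨hm1pos.ne'⟩
  have hm1ne1 : m1 ≠ 1 := by
    intro h1
    have : η = 1 := orderOf_eq_one_iff.mp (hordη.trans h1)
    exact he (hζ.dvd_of_pow_eq_one e this)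
  have hηprim : IsPrimitiveRoot η m1 := hordη ▸ IsPrimitiveRoot.orderOf η
  have hpow : ∀ t : ℕ, ζ ^ (t * e) = η ^ (t % m1) := by
    intro t
    rw [mul_comm, pow_mul, ← hη, ← hordη, pow_mod_orderOf]
  have hC : ∑ t ∈ (range m).filter m.Coprime, ζ ^ (t * e)
      = ∑ t ∈ (range m).filter m.Coprime, (fun s => η ^ s) (t % m1) :=
    Finset.sum_congr rfl (fun t _ => hpow t)
  have hmain := units_pushforward hm1dvd (fun s => η ^ s)
  rw [unitSum_eq_moebius m1 hm1pos η hηprim] at hmain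
  -- take norms
  have hnorm : (m1.totient : ℝ) * ‖∑ t ∈ (range m).filter m.Coprime, ζ ^ (t * e)‖
      = (m.totient : ℝ) * ‖((ArithmeticFunction.moebius m1 : ℤ) : ℂ)‖ := by
    rw [hC]
    have := congrArg norm hmain
    rwa [norm_mul, norm_mul, Complex.norm_natCast, Complex.norm_natCast] at this
  -- minFac m - 1 ≤ totient m1
  have hq : m1.minFac.Prime := Nat.minFac_prime hm1ne1
  have hqm : m.minFac ≤ m1.minFac :=
    Nat.minFac_le_of_dvd hq.two_le ((Nat.minFac_dvd m1).trans hm1dvd)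
  have hphi : m1.minFac - 1 ≤ m1.totient := by
    have h1 : Nat.totient m1.minFac ∣ Nat.totient m1 :=
      Nat.totient_dvd_of_dvd (Nat.minFac_dvd m1)
    rw [Nat.totient_prime hq] at h1
    exact Nat.le_of_dvd (Nat.totient_pos.mpr hm1pos) h1
  have hfinal : m.minFac - 1 ≤ m1.totient := le_trans (by omega) hphi
  calc (m.minFac - 1 : ℝ) * ‖∑ t ∈ (range m).filter m.Coprime, ζ ^ (t * e)‖
      ≤ (m1.totient : ℝ) * ‖∑ t ∈ (range m).filter m.Coprime, ζ ^ (t * e)‖ := by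
        apply mul_le_mul_of_nonneg_right _ (norm_nonneg _)
        have h2 : 1 ≤ m.minFac := (Nat.minFac_prime (by omega)).one_lt.le.trans' (by omega)
        calc (m.minFac - 1 : ℝ) = ((m.minFac - 1 : ℕ) : ℝ) := by
              push_cast [Nat.cast_sub h2]
              ring
          _ ≤ (m1.totient : ℝ) := Nat.cast_le.mpr hfinal
    _ = (m.totient : ℝ) * ‖((ArithmeticFunction.moebius m1 : ℤ) : ℂ)‖ := hnorm
    _ ≤ (m.totient : ℝ) * 1 := by
        apply mul_le_mul_of_nonneg_left (moebius_norm_le_one m1) (by positivity)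
    _ = (m.totient : ℝ) := mul_one _

lemma vanishing_sum_card {ι : Type*} {s : Finset ι} (hs : s.Nonempty) {m : ℕ} (hm : 2 ≤ m)
    {ζ : ℂ} (hζ : IsPrimitiveRoot ζ m) (b : ι → ℕ)
    (hsum : ∑ i ∈ s, ζ ^ (b i) = 0) : m.minFac ≤ s.card := by
  classical
  have hm0 : 0 < m := by omega
  haveI : NeZero m := ⟨hm0.ne'⟩
  obtain ⟨i0, hi0⟩ := hs
  set c := m - b i0 % m with hc
  set e : ι → ℕ := fun i => (b i + c) % m with he
  have hordζ : orderOf ζ = m := hζ.eq_orderOf.symm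
  have he0 : e i0 = 0 := by
    have hkey : b i0 + (m - b i0 % m) = m * (b i0 / m + 1) := by
      have h1 := Nat.mod_add_div (b i0) m
      have h2 : b i0 % m < m := Nat.mod_lt _ hm0
      calc b i0 + (m - b i0 % m)
          = (b i0 % m + m * (b i0 / m)) + (m - b i0 % m) := by rw [h1]
        _ = m * (b i0 / m) + m := by omega
        _ = m * (b i0 / m + 1) := by ring
    simp only [he, hc, hkey, Nat.mul_mod_right]
  have hesum : ∑ i ∈ s, ζ ^ (e i) = 0 := by
    have : ∀ i ∈ s, ζ ^ (e i) = ζ ^ (b i) * ζ ^ c := by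
      intro i _
      rw [he]
      simp only []
      rw [← hordζ, pow_mod_orderOf, pow_add]
    rw [Finset.sum_congr rfl this, ← Finset.sum_mul, hsum, zero_mul]
  have helt : ∀ i, e i < m := fun i => Nat.mod_lt _ hm0
  -- polynomial and conjugates
  set f : Polynomial ℚ := ∑ i ∈ s, Polynomial.X ^ (e i) with hf
  have haev : Polynomial.aeval ζ f = 0 := by
    rw [hf, map_sum]
    simpa using hesum
  have hdvd : Polynomial.cyclotomic m ℚ ∣ f := by
    rw [Polynomial.cyclotomic_eq_minpoly_rat hζ hm0]
    exact minpoly.dvd ℚ ζ haev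
  obtain ⟨g, hg⟩ := hdvd
  haveI : NeZero (m : ℂ) := ⟨Nat.cast_ne_zero.mpr hm0.ne'⟩
  have hconj : ∀ t ∈ (range m).filter m.Coprime, ∑ i ∈ s, ζ ^ (t * e i) = 0 := by
    intro t ht
    have hco : t.Coprime m := (Finset.mem_filter.mp ht).2.symm
    have hprim : IsPrimitiveRoot (ζ ^ t) m := hζ.pow_of_coprime t hco
    have hroot : Polynomial.aeval (ζ ^ t) (Polynomial.cyclotomic m ℚ) = 0 := by
      have h := (Polynomial.isRoot_cyclotomic_iff (R := ℂ)).mpr hprim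
      rw [Polynomial.aeval_def, ← Polynomial.eval_map, Polynomial.map_cyclotomic]
      exact h
    have : Polynomial.aeval (ζ ^ t) f = 0 := by
      rw [hg, map_mul, hroot, zero_mul]
    rw [hf, map_sum] at this
    simp only [map_pow, Polynomial.aeval_X] at this
    rw [← this]
    apply Finset.sum_congr rfl
    intro i _
    rw [pow_mul]
  -- sum over all conjugates
  have hswap : ∑ i ∈ s, ∑ t ∈ (range m).filter m.Coprime, ζ ^ (t * e i) = 0 := by
    rw [Finset.sum_comm]
    rw [Finset.sum_congr rfl hconj]
    exact Finset.sum_const_zero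
  rw [← Finset.sum_filter_add_sum_filter_not s (fun i => e i = 0)] at hswap
  have hgood : ∑ i ∈ s.filter (fun i => e i = 0),
      ∑ t ∈ (range m).filter m.Coprime, ζ ^ (t * e i)
      = ((s.filter (fun i => e i = 0)).card : ℂ) * (m.totient : ℂ) := by
    rw [Finset.sum_congr rfl (fun i hi => ?_), Finset.sum_const, nsmul_eq_mul]
    rw [(Finset.mem_filter.mp hi).2]
    simp [Nat.totient_eq_card_coprime]
  set k := (s.filter (fun i => e i = 0)).card with hk
  have hk1 : 1 ≤ k := Finset.card_pos.mpr ⟨i0, Finset.mem_filter.mpr ⟨hi0, he0⟩⟩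
  rw [hgood] at hswap
  set bad := s.filter (fun i => ¬ e i = 0) with hbad
  have hnorm1 : (k : ℝ) * (m.totient : ℝ)
      = ‖∑ i ∈ bad, ∑ t ∈ (range m).filter m.Coprime, ζ ^ (t * e i)‖ := by
    have : ∑ i ∈ bad, ∑ t ∈ (range m).filter m.Coprime, ζ ^ (t * e i)
        = -((k : ℂ) * (m.totient : ℂ)) := by linear_combination hswap
    rw [this, norm_neg]
    rw [norm_mul, Complex.norm_natCast, Complex.norm_natCast]
  set p0 := m.minFac with hp0
  have hp0ge : 2 ≤ p0 := (Nat.minFac_prime (by omega)).two_le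
  have hbound : ∀ i ∈ bad, (p0 - 1 : ℝ) *
      ‖∑ t ∈ (range m).filter m.Coprime, ζ ^ (t * e i)‖ ≤ (m.totient : ℝ) := by
    intro i hi
    have hne : e i ≠ 0 := (Finset.mem_filter.mp hi).2
    have hnd : ¬ m ∣ e i := by
      intro hdd
      exact hne (Nat.eq_zero_of_dvd_of_lt hdd (helt i))
    exact ramanujan_bound hm hζ hnd
  have hcard : k + bad.card = s.card := by
    rw [hk, hbad]
    exact Finset.card_filter_add_card_filter_not _
  -- real arithmetic
  have hchain : (p0 - 1 : ℝ) * ((k : ℝ) * (m.totient : ℝ)) ≤ (bad.card : ℝ) * (m.totient : ℝ) := by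
    rw [hnorm1]
    calc (p0 - 1 : ℝ) * ‖∑ i ∈ bad, ∑ t ∈ (range m).filter m.Coprime, ζ ^ (t * e i)‖
        ≤ (p0 - 1 : ℝ) * ∑ i ∈ bad, ‖∑ t ∈ (range m).filter m.Coprime, ζ ^ (t * e i)‖ := by
          apply mul_le_mul_of_nonneg_left (norm_sum_le _ _) (by
            have : (2:ℝ) ≤ p0 := by exact_mod_cast hp0ge
            linarith)
      _ = ∑ i ∈ bad, (p0 - 1 : ℝ) * ‖∑ t ∈ (range m).filter m.Coprime, ζ ^ (t * e i)‖ := by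
          rw [Finset.mul_sum]
      _ ≤ ∑ i ∈ bad, (m.totient : ℝ) := Finset.sum_le_sum hbound
      _ = (bad.card : ℝ) * (m.totient : ℝ) := by rw [Finset.sum_const, nsmul_eq_mul]
  have hφpos : (0:ℝ) < (m.totient : ℝ) := by
    exact_mod_cast Nat.totient_pos.mpr hm0
  have h2 : (p0 - 1 : ℝ) * (k : ℝ) ≤ (bad.card : ℝ) := by
    have := (mul_le_mul_iff_of_pos_right hφpos).mp (by
      calc (p0 - 1 : ℝ) * (k : ℝ) * (m.totient : ℝ)
          = (p0 - 1 : ℝ) * ((k : ℝ) * (m.totient : ℝ)) := by ring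
        _ ≤ (bad.card : ℝ) * (m.totient : ℝ) := hchain)
    exact this
  have hfinal : (p0 : ℝ) ≤ (s.card : ℝ) := by
    have hkr : (1:ℝ) ≤ (k:ℝ) := by exact_mod_cast hk1
    have hcr : (k : ℝ) + (bad.card : ℝ) = (s.card : ℝ) := by exact_mod_cast hcard
    nlinarith [hp0ge, h2, hkr, hcr]
  exact_mod_cast hfinal

/-- Znám's theorem: in an exact covering system with M = lcm of the moduli at
least 2, and p the smallest prime dividing M, the largest modulus is attained
by at least p of the residue classes. -/
theorem znam (N : ℕ) (a : Fin N → ℤ) (m : Fin N → ℕ) (hm : ∀ i, 1 ≤ m i)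
    (M : ℕ) (hM : M = Finset.univ.lcm m) (hM2 : 2 ≤ M)
    (p : ℕ) (hp : p.Prime) (hpM : p ∣ M)
    (hpmin : ∀ q : ℕ, q.Prime → q ∣ M → p ≤ q)
    (hdisj : ∀ i j : Fin N, i ≠ j → ∀ x : ℤ,
      x ≡ a i [ZMOD (m i : ℤ)] → x ≡ a j [ZMOD (m j : ℤ)] → False)
    (hcover : ∀ x : ℤ, ∃ i : Fin N, x ≡ a i [ZMOD (m i : ℤ)]) :
    p ≤ (Finset.univ.filter (fun i : Fin N => ∀ j, m j ≤ m i)).card := by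

  classical
  obtain ⟨iw, -⟩ := hcover 0
  obtain ⟨i₀, -, hmax⟩ := Finset.exists_max_image Finset.univ m ⟨iw, Finset.mem_univ _⟩
  set ms := m i₀ with hms
  have hdvdM : ∀ i, m i ∣ M := fun i => hM ▸ Finset.dvd_lcm (Finset.mem_univ i)
  have hMpos : 0 < M := by omega
  have hms2 : 2 ≤ ms := by
    by_contra hcon
    have hall : ∀ i, m i = 1 := fun i =>
      le_antisymm (le_trans (hmax i (Finset.mem_univ i)) (by omega)) (hm i)
    have : M ∣ 1 := hM ▸ Finset.lcm_dvd (fun i _ => by rw [hall i])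
    have := Nat.le_of_dvd one_pos this
    omega
  have hmspos : 0 < ms := by omega
  have hmsdvd : ms ∣ M := hdvdM i₀
  -- normalized residues
  set b : Fin N → ℕ := fun i => (a i % (m i : ℤ)).toNat with hb
  have hmz : ∀ i, (0:ℤ) < (m i : ℤ) := fun i => by exact_mod_cast hm i
  have hbeq : ∀ i, (b i : ℤ) = a i % (m i : ℤ) := fun i =>
    Int.toNat_of_nonneg (Int.emod_nonneg _ (hmz i).ne')
  have hblt : ∀ i, b i < m i := by
    intro i
    have h1 : a i % (m i : ℤ) < (m i : ℤ) := Int.emod_lt_of_pos _ (hmz i)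
    rw [← hbeq i] at h1
    exact_mod_cast h1
  have hmem : ∀ (k : ℕ) (i : Fin N), ((k:ℤ) ≡ a i [ZMOD (m i : ℤ)]) ↔ k % m i = b i := by
    intro k i
    constructor
    · intro h
      have h2 : (k:ℤ) % (m i : ℤ) = a i % (m i : ℤ) := h
      rw [← hbeq i] at h2
      have h3 : ((k % m i : ℕ) : ℤ) = (b i : ℤ) := by
        push_cast at h2 ⊢
        omega
      exact_mod_cast h3
    · intro h
      show (k:ℤ) % (m i : ℤ) = a i % (m i : ℤ)
      rw [← hbeq i, ← h]
      push_cast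
      omega
  have huniq : ∀ k : ℕ, ∃! i, k % m i = b i := by
    intro k
    obtain ⟨i, hi⟩ := hcover (k : ℤ)
    refine ⟨i, (hmem k i).mp hi, ?_⟩
    intro j hj
    by_contra hne
    exact hdisj j i hne (k : ℤ) ((hmem k j).mpr hj) hi
  -- primitive root
  obtain ⟨ζ, hζ⟩ : ∃ ζ : ℂ, IsPrimitiveRoot ζ ms :=
    ⟨Complex.exp (2 * Real.pi * Complex.I / ms), Complex.isPrimitiveRoot_exp ms hmspos.ne'⟩
  have hζM : ζ ^ M = 1 := (hζ.pow_eq_one_iff_dvd M).mpr hmsdvd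
  have hgeomM : ∑ k ∈ range M, ζ ^ k = 0 := geom_zero (hζ.ne_one (by omega)) hζM
  -- split the geometric sum along the partition
  have hsplit1 : ∀ k, ζ ^ k = ∑ i : Fin N, (if k % m i = b i then ζ ^ k else 0) := by
    intro k
    obtain ⟨i, hi, hu⟩ := huniq k
    rw [Finset.sum_eq_single i (fun j _ hji => if_neg (fun hj => hji (hu j hj)))
      (fun h => absurd (Finset.mem_univ i) h)]
    rw [if_pos hi]
  have hsplit : ∑ k ∈ range M, ζ ^ k
      = ∑ i : Fin N, ∑ k ∈ (range M).filter (fun k => k % m i = b i), ζ ^ k := by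
    calc ∑ k ∈ range M, ζ ^ k
        = ∑ k ∈ range M, ∑ i : Fin N, (if k % m i = b i then ζ ^ k else 0) :=
          Finset.sum_congr rfl (fun k _ => hsplit1 k)
      _ = ∑ i : Fin N, ∑ k ∈ range M, (if k % m i = b i then ζ ^ k else 0) := Finset.sum_comm
      _ = ∑ i : Fin N, ∑ k ∈ (range M).filter (fun k => k % m i = b i), ζ ^ k :=
          Finset.sum_congr rfl (fun i _ => (Finset.sum_filter _ _).symm)
  have hclass : ∀ i : Fin N, (range M).filter (fun k => k % m i = b i)
      = (range (M / m i)).image (fun j => b i + j * m i) := by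
    intro i
    ext k
    simp only [Finset.mem_filter, Finset.mem_range, Finset.mem_image]
    constructor
    · rintro ⟨hkM, hkb⟩
      refine ⟨k / m i, Nat.div_lt_div_of_lt_of_dvd (hdvdM i) hkM, ?_⟩
      have hmd := Nat.mod_add_div k (m i)
      rw [Nat.mul_comm (m i) (k / m i)] at hmd
      omega
    · rintro ⟨j, hj, rfl⟩
      have hj1 : j + 1 ≤ M / m i := hj
      have h2 : (j + 1) * m i ≤ (M / m i) * m i := Nat.mul_le_mul_right _ hj1
      rw [Nat.div_mul_cancel (hdvdM i)] at h2
      have h3 := hblt i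
      constructor
      · calc b i + j * m i < (j + 1) * m i := by
              have : (j + 1) * m i = j * m i + m i := by ring
              omega
          _ ≤ M := h2
      · rw [Nat.add_mul_mod_self_right, Nat.mod_eq_of_lt (hblt i)]
  have hinner : ∀ i : Fin N, ∑ k ∈ (range M).filter (fun k => k % m i = b i), ζ ^ k
      = ζ ^ (b i) * ∑ j ∈ range (M / m i), (ζ ^ m i) ^ j := by
    intro i
    have hinj : ∀ j ∈ range (M / m i), ∀ j' ∈ range (M / m i),
        b i + j * m i = b i + j' * m i → j = j' := by
      intro j _ j' _ h
      exact Nat.eq_of_mul_eq_mul_right (hm i) (Nat.add_left_cancel h)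
    rw [hclass i, Finset.sum_image hinj, Finset.mul_sum]
    apply Finset.sum_congr rfl
    intro j _
    rw [pow_add, pow_mul']
  have hgeom_i : ∀ i : Fin N, ∑ j ∈ range (M / m i), (ζ ^ m i) ^ j
      = if m i = ms then ((M / ms : ℕ) : ℂ) else 0 := by
    intro i
    by_cases hi : m i = ms
    · rw [if_pos hi, hi, hζ.pow_eq_one]
      simp
    · rw [if_neg hi]
      apply geom_zero
      · intro h1
        have hdv := (hζ.pow_eq_one_iff_dvd (m i)).mp h1
        have h2 := Nat.le_of_dvd (by have := hm i; omega) hdv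
        exact hi (le_antisymm (hmax i (Finset.mem_univ i)) h2)
      · rw [← pow_mul, Nat.mul_div_cancel' (hdvdM i)]
        exact hζM
  have hfinal0 : (0:ℂ) = ∑ i : Fin N, (if m i = ms then ((M/ms:ℕ):ℂ) * ζ ^ (b i) else 0) := by
    have h0 : ∑ i : Fin N, ∑ k ∈ (range M).filter (fun k => k % m i = b i), ζ ^ k = 0 := by
      rw [← hsplit]; exact hgeomM
    conv_lhs => rw [← h0]
    apply Finset.sum_congr rfl
    intro i _
    rw [hinner i, hgeom_i i]
    by_cases hi : m i = ms
    · rw [if_pos hi, if_pos hi]; ring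
    · rw [if_neg hi, if_neg hi]; ring
  rw [← Finset.sum_filter] at hfinal0
  rw [← Finset.mul_sum] at hfinal0
  have hMms : ((M/ms:ℕ):ℂ) ≠ 0 :=
    Nat.cast_ne_zero.mpr (Nat.div_pos (Nat.le_of_dvd hMpos hmsdvd) hmspos).ne'
  have hSsum : ∑ i ∈ Finset.univ.filter (fun i => m i = ms), ζ ^ (b i) = 0 := by
    rcases mul_eq_zero.mp hfinal0.symm with h | h
    · exact absurd h hMms
    · exact h
  have hSne : (Finset.univ.filter (fun i : Fin N => m i = ms)).Nonempty :=
    ⟨i₀, Finset.mem_filter.mpr ⟨Finset.mem_univ _, rfl⟩⟩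
  have hLL := vanishing_sum_card hSne hms2 hζ b hSsum
  have hple : p ≤ ms.minFac :=
    hpmin _ (Nat.minFac_prime (by omega)) ((Nat.minFac_dvd ms).trans hmsdvd)
  have hSeq : Finset.univ.filter (fun i : Fin N => ∀ j, m j ≤ m i)
      = Finset.univ.filter (fun i : Fin N => m i = ms) := by
    apply Finset.filter_congr
    intro i _
    constructor
    · intro h
      exact le_antisymm (hmax i (Finset.mem_univ i)) (h i₀)
    · intro h j
      rw [h]
      exact hmax j (Finset.mem_univ j)
  rw [hSeq]
  omega
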